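/- Under single-peaked preferences with an odd number of voters, every Gehrlein-stable set of candidates consists of candidates that are adjacent in the left-right ordering (i.e., forms an interval of consecutive candidates). -/
import Mathlib


open Finset

/-- Each voter's preference is a strict total (linear) order on the candidates. -/
def StrictPrefs {m N : ℕ} (P : Fin N → Fin m → Fin m → Prop) : Prop :=
  ∀ v : Fin N, IsStrictTotalOrder (Fin m) (P v)

/-- Single-peakedness w.r.t. the left-right order on `Fin m`: for `i < j < k`,
no voter ranks both `C_i` and `C_k` above `C_j`. -/
def SinglePeaked {m N : ℕ} (P : Fin N → Fin m → Fin m → Prop) : Prop :=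
  ∀ (v : Fin N) (i j k : Fin m), i < j → j < k → ¬ (P v i j ∧ P v k j)

/-- Number of voters preferring `a` to `b`. -/
def prefCount {m N : ℕ} (P : Fin N → Fin m → Fin m → Prop)
    [∀ v a b, Decidable (P v a b)] (a b : Fin m) : ℕ :=
  (univ.filter fun v => P v a b).card

/-- `a` majority-defeats `b`: strictly more than `N/2` voters prefer `a` to `b`. -/
def Defeats {m N : ℕ} (P : Fin N → Fin m → Fin m → Prop)
    [∀ v a b, Decidable (P v a b)] (a b : Fin m) : Prop :=
  2 * prefCount P a b > N

instance {m N : ℕ} (P : Fin N → Fin m → Fin m → Prop)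
    [∀ v a b, Decidable (P v a b)] (a b : Fin m) : Decidable (Defeats P a b) :=
  inferInstanceAs (Decidable (2 * prefCount P a b > N))

/-- Voter `v` approves candidate `a` under Bloc voting with `k` winners:
`a` is among `v`'s top `k` candidates. -/
def Approves {m N : ℕ} (P : Fin N → Fin m → Fin m → Prop)
    [∀ v a b, Decidable (P v a b)] (k : ℕ) (v : Fin N) (a : Fin m) : Prop :=
  (univ.filter fun b => P v b a).card < k

instance {m N : ℕ} (P : Fin N → Fin m → Fin m → Prop)
    [∀ v a b, Decidable (P v a b)] (k : ℕ) (v : Fin N) (a : Fin m) :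
    Decidable (Approves P k v a) :=
  inferInstanceAs (Decidable ((univ.filter fun b => P v b a).card < k))

/-- Bloc score of candidate `a`: the number of voters who approve `a`. -/
def blocScore {m N : ℕ} (P : Fin N → Fin m → Fin m → Prop)
    [∀ v a b, Decidable (P v a b)] (k : ℕ) (a : Fin m) : ℕ :=
  (univ.filter fun v => Approves P k v a).card

/-- `W` is a winning set under Bloc voting with `k` winners (strict vote totals):
`W` has `k` members and each member has strictly more approvals than each non-member. -/
def IsWinningSet {m N : ℕ} (P : Fin N → Fin m → Fin m → Prop)
    [∀ v a b, Decidable (P v a b)] (k : ℕ) (W : Finset (Fin m)) : Prop :=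
  W.card = k ∧ ∀ w ∈ W, ∀ c ∉ W, blocScore P k w > blocScore P k c

/-- Every Gehrlein-stable set is an interval of consecutive candidates
in the left-right ordering. -/
theorem gehrlein_stable_adjacent {m N : ℕ}
    (P : Fin N → Fin m → Fin m → Prop) [∀ v a b, Decidable (P v a b)]
    (hP : StrictPrefs P) (hSP : SinglePeaked P) (hN : Odd N)
    (W : Finset (Fin m)) (hG : ∀ w ∈ W, ∀ c ∉ W, Defeats P w c) :
    ∀ a ∈ W, ∀ b ∈ W, ∀ c : Fin m, a ≤ c → c ≤ b → c ∈ W := by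
  intro a ha b hb c hac hcb
  by_contra hc
  have hac' : a < c := lt_of_le_of_ne hac (by rintro rfl; exact hc ha)
  have hcb' : c < b := lt_of_le_of_ne hcb (by rintro rfl; exact hc hb)
  have hda := hG a ha c hc
  have hdb := hG b hb c hc
  set A := univ.filter fun v => P v a c with hA
  set B := univ.filter fun v => P v b c with hB
  have hsum : A.card + B.card > N := by
    simp only [Defeats, prefCount] at hda hdb
    rw [hA, hB]
    omega
  have hunion : (A ∪ B).card ≤ N := by
    simpa using (card_le_card (subset_univ (A ∪ B))).trans_eq (by simp)
  have hinter : 0 < (A ∩ B).card := by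
    have h := card_union_add_card_inter A B
    omega
  obtain ⟨v, hv⟩ := card_pos.mp hinter
  simp only [hA, hB, mem_inter, mem_filter, mem_univ, true_and] at hv
  exact hSP v a c b hac' hcb' hv
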